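/- Every context-free language L with ε ∉ L can be generated by a context-free grammar in Greibach Normal Form, i.e. a grammar in which every production is of the form A → aγ with A a nonterminal, a a terminal, and γ a (possibly empty) string of nonterminals. -/

import Mathlib

/-- A leftmost derivation step: the leftmost nonterminal occurrence (i.e. a nonterminal
preceded only by terminals) is rewritten using a rule of the grammar. -/
def LeftmostProduces {T : Type} (g : ContextFreeGrammar T)
    (u v : List (Symbol T g.NT)) : Prop :=
  ∃ r ∈ g.rules, ∃ (x : List T) (γ : List (Symbol T g.NT)),
    u = List.map Symbol.terminal x ++ Symbol.nonterminal r.input :: γ ∧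
    v = List.map Symbol.terminal x ++ r.output ++ γ

/-- Zero or more leftmost derivation steps. -/
abbrev LeftmostDerives {T : Type} (g : ContextFreeGrammar T) :
    List (Symbol T g.NT) → List (Symbol T g.NT) → Prop :=
  Relation.ReflTransGen (LeftmostProduces g)

/-- `G` is LL(1): whenever `S ⇒*lm wAγ` and two `A`-productions `A → α`, `A → β` admit
leftmost derivations `wαγ ⇒*lm wx` and `wβγ ⇒*lm wy` with `x` and `y` both empty or
beginning with the same terminal, the two productions coincide. -/
def IsLL1 {T : Type} (g : ContextFreeGrammar T) : Prop :=
  ∀ (w : List T) (A : g.NT) (γ : List (Symbol T g.NT))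
    (r₁ r₂ : ContextFreeRule T g.NT),
    LeftmostDerives g [Symbol.nonterminal g.initial]
      (List.map Symbol.terminal w ++ Symbol.nonterminal A :: γ) →
    r₁ ∈ g.rules → r₂ ∈ g.rules → r₁.input = A → r₂.input = A →
    ∀ x y : List T,
      LeftmostDerives g (List.map Symbol.terminal w ++ r₁.output ++ γ)
        (List.map Symbol.terminal (w ++ x)) →
      LeftmostDerives g (List.map Symbol.terminal w ++ r₂.output ++ γ)
        (List.map Symbol.terminal (w ++ y)) →
      ((x = [] ∧ y = []) ∨ ∃ (a : T) (x' y' : List T), x = a :: x' ∧ y = a :: y') →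
      r₁.output = r₂.output

/-- `G` is in Greibach Normal Form: every production is of the form `A → aγ`
with `a` a terminal and `γ` a string of nonterminals. -/
def InGNF {T : Type} (g : ContextFreeGrammar T) : Prop :=
  ∀ r ∈ g.rules, ∃ (a : T) (γ : List g.NT),
    r.output = Symbol.terminal a :: List.map Symbol.nonterminal γ

namespace GNF

attribute [local instance 5] Classical.propDecidable

open ContextFreeGrammar Symbol

variable {T : Type}

/-- Step-counted derivations. -/
inductive DerivesIn {T : Type} (g : ContextFreeGrammar T) :
    List (Symbol T g.NT) → List (Symbol T g.NT) → ℕ → Prop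
  | refl (u : List (Symbol T g.NT)) : DerivesIn g u u 0
  | head {u v w n} : g.Produces u v → DerivesIn g v w n → DerivesIn g u w (n + 1)

variable {g : ContextFreeGrammar T}

lemma DerivesIn.derives {u v n} (h : DerivesIn g u v n) : g.Derives u v := by
  induction h with
  | refl => rfl
  | head p _ ih => exact p.trans_derives ih

lemma derives_iff_derivesIn {u v} : g.Derives u v ↔ ∃ n, DerivesIn g u v n := by
  constructor
  · intro h
    induction h with
    | refl => exact ⟨0, .refl u⟩
    | tail _ p ih =>
      obtain ⟨n, hn⟩ := ih
      refine ⟨n + 1, ?_⟩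
      clear * - hn p
      induction hn with
      | refl => exact .head p (.refl _)
      | head q _ ih => exact .head q (ih p)
  · rintro ⟨n, h⟩; exact h.derives

lemma DerivesIn.trans {u v w m n} (h₁ : DerivesIn g u v m) (h₂ : DerivesIn g v w n) :
    DerivesIn g u w (m + n) := by
  induction h₁ with
  | refl => simpa using h₂
  | head p _ ih => exact Nat.succ_add _ n ▸ DerivesIn.head p (ih h₂)

lemma DerivesIn.append_left {u v n} (h : DerivesIn g u v n) (p : List (Symbol T g.NT)) :
    DerivesIn g (p ++ u) (p ++ v) n := by
  induction h with
  | refl => exact .refl _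
  | head q _ ih => exact .head (q.append_left p) ih

lemma DerivesIn.append_right {u v n} (h : DerivesIn g u v n) (p : List (Symbol T g.NT)) :
    DerivesIn g (u ++ p) (v ++ p) n := by
  induction h with
  | refl => exact .refl _
  | head q _ ih => exact .head (q.append_right p) ih

lemma not_produces_terminal (w : List T) (v : List (Symbol T g.NT)) :
    ¬ g.Produces (List.map Symbol.terminal w) v := by
  rintro ⟨r, -, hr⟩
  obtain ⟨p, q, hu, -⟩ := hr.exists_parts
  have : Symbol.nonterminal r.input ∈ List.map (Symbol.terminal (N := g.NT)) w := by
    rw [hu]; simp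
  simp at this

lemma DerivesIn.terminal_rigid {w : List T} {v n}
    (h : DerivesIn g (List.map Symbol.terminal w) v n) :
    v = List.map Symbol.terminal w ∧ n = 0 := by
  cases h with
  | refl => exact ⟨rfl, rfl⟩
  | head p _ => exact absurd p (not_produces_terminal w _)

lemma DerivesIn.nil_rigid {v n} (h : DerivesIn g [] v n) : v = [] ∧ n = 0 := by
  have := h.terminal_rigid (w := []); simpa using this

/-- Splitting a derivation of a concatenation. -/
lemma DerivesIn.append_split {u₁ u₂ v : List (Symbol T g.NT)} {n}
    (h : DerivesIn g (u₁ ++ u₂) v n) :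
    ∃ v₁ v₂ n₁ n₂, v = v₁ ++ v₂ ∧ n₁ + n₂ = n ∧
      DerivesIn g u₁ v₁ n₁ ∧ DerivesIn g u₂ v₂ n₂ := by
  induction n generalizing u₁ u₂ with
  | zero =>
    cases h with
    | refl => exact ⟨u₁, u₂, 0, 0, rfl, rfl, .refl _, .refl _⟩
  | succ n ih =>
    cases h with
    | head p hrest =>
      obtain ⟨r, hrmem, hr⟩ := p
      obtain ⟨p', q', hu, hv⟩ := hr.exists_parts
      rw [List.append_assoc] at hu
      rcases List.append_eq_append_iff.mp hu with ⟨a', ha1, ha2⟩ | ⟨c', hc1, hc2⟩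
      · -- p' = u₁ ++ a', u₂ = a' ++ [nt] ++ q' : rewrite inside u₂
        subst ha1 ha2
        have hstep : DerivesIn g (u₁ ++ (a' ++ r.output ++ q')) v n := by
          rw [hv] at hrest
          simpa [List.append_assoc] using hrest
        obtain ⟨v₁, v₂, n₁, n₂, rfl, hn, h1, h2⟩ := ih hstep
        refine ⟨v₁, v₂, n₁, n₂ + 1, rfl, by omega, h1, ?_⟩
        have hp : g.Produces (a' ++ [Symbol.nonterminal r.input] ++ q')
            (a' ++ r.output ++ q') :=
          ⟨r, hrmem, ContextFreeRule.rewrites_of_exists_parts r a' q'⟩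
        rw [List.append_assoc] at hp
        exact .head hp h2
      · -- u₁ = p' ++ c', [nt] ++ q' = c' ++ u₂
        rcases c' with _ | ⟨x, c''⟩
        · -- c' = [] : u₁ = p', u₂ = [nt] ++ q'
          simp only [List.append_nil] at hc1
          subst hc1
          have hstep : DerivesIn g (u₁ ++ (r.output ++ q')) v n := by
            rw [hv] at hrest
            simpa [List.append_assoc] using hrest
          obtain ⟨v₁, v₂, n₁, n₂, rfl, hn, h1, h2⟩ := ih hstep
          refine ⟨v₁, v₂, n₁, n₂ + 1, rfl, by omega, h1, ?_⟩
          have hp : g.Produces ([] ++ [Symbol.nonterminal r.input] ++ q')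
              ([] ++ r.output ++ q') :=
            ⟨r, hrmem, ContextFreeRule.rewrites_of_exists_parts r [] q'⟩
          simp only [List.nil_append] at hp hc2
          rw [hc2] at hp
          exact .head hp h2
        · -- x = nt, q' = c'' ++ u₂, u₁ = p' ++ [nt] ++ c''
          simp only [List.cons_append, List.singleton_append, List.cons.injEq] at hc2
          obtain ⟨rfl, rfl⟩ := hc2
          have hu₁ : u₁ = p' ++ [Symbol.nonterminal r.input] ++ c'' := by
            rw [hc1]; simp
          have hstep : DerivesIn g ((p' ++ r.output ++ c'') ++ u₂) v n := by
            rw [hv] at hrest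
            simpa [List.append_assoc] using hrest
          obtain ⟨v₁, v₂, n₁, n₂, rfl, hn, h1, h2⟩ := ih hstep
          refine ⟨v₁, v₂, n₁ + 1, n₂, rfl, by omega, ?_, h2⟩
          have hp : g.Produces u₁ (p' ++ r.output ++ c'') := by
            rw [hu₁]; exact ⟨r, hrmem, ContextFreeRule.rewrites_of_exists_parts r p' c''⟩
          exact .head hp h1

/-- A derivation from a single nonterminal with positive length starts with a rule. -/
lemma DerivesIn.head_rule {A : g.NT} {v n}
    (h : DerivesIn g [Symbol.nonterminal A] v (n + 1)) :
    ∃ r ∈ g.rules, r.input = A ∧ DerivesIn g r.output v n := by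
  cases h with
  | head p hrest =>
    obtain ⟨r, hrmem, hr⟩ := p
    obtain ⟨p', q', hu, hv⟩ := hr.exists_parts
    have hlen : p'.length + (q'.length + 1) = 1 := by
      have := congrArg List.length hu
      simpa using this.symm
    have hp' : p' = [] := List.eq_nil_of_length_eq_zero (by omega)
    have hq' : q' = [] := List.eq_nil_of_length_eq_zero (by omega)
    subst hp' hq'
    simp only [List.nil_append, List.append_nil, List.cons.injEq] at hu
    have hA : r.input = A := by
      have := hu.1
      exact (Symbol.nonterminal.inj this.symm)
    exact ⟨r, hrmem, hA, by rw [hv] at hrest; simpa using hrest⟩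

lemma DerivesIn.zero_eq {u v : List (Symbol T g.NT)} (h : DerivesIn g u v 0) : u = v := by
  cases h; rfl

lemma DerivesIn.nt_ne_terminal {A : g.NT} {w : List T} {n}
    (h : DerivesIn g [Symbol.nonterminal A] (List.map Symbol.terminal w) n) :
    ∃ m, n = m + 1 := by
  cases n with
  | zero =>
    exfalso
    have heq := h.zero_eq
    rcases w with _ | ⟨a, w'⟩
    · simp at heq
    · simp only [List.map_cons, List.cons.injEq] at heq
      exact absurd heq.1 (by simp)
  | succ m => exact ⟨m, rfl⟩


lemma Derives.append_both {g : ContextFreeGrammar T} {u₁ v₁ u₂ v₂ : List (Symbol T g.NT)}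
    (h₁ : g.Derives u₁ v₁) (h₂ : g.Derives u₂ v₂) : g.Derives (u₁ ++ u₂) (v₁ ++ v₂) :=
  (h₁.append_right u₂).trans (h₂.append_left v₁)

/-- Homomorphic simulation: the "easy direction" of all grammar transformations. -/
lemma derives_flatMap (g g' : ContextFreeGrammar T)
    (f : Symbol T g'.NT → List (Symbol T g.NT))
    (hr : ∀ r' ∈ g'.rules, g.Derives (f (Symbol.nonterminal r'.input)) (r'.output.flatMap f)) :
    ∀ {u v}, g'.Derives u v → g.Derives (u.flatMap f) (v.flatMap f) := by
  intro u v h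
  induction h with
  | refl => rfl
  | tail _ p ih =>
    refine ih.trans ?_
    obtain ⟨r, hrmem, hrw⟩ := p
    obtain ⟨p', q', rfl, rfl⟩ := hrw.exists_parts
    simp only [List.flatMap_append]
    exact Derives.append_both (Derives.append_both (by rfl) (by simpa using hr r hrmem)) (by rfl)

variable {g : ContextFreeGrammar T}

/-- Splitting a derivation of a terminal word. -/
lemma DerivesIn.append_split_word {u₁ u₂ : List (Symbol T g.NT)} {w : List T} {n}
    (h : DerivesIn g (u₁ ++ u₂) (List.map Symbol.terminal w) n) :
    ∃ w₁ w₂ n₁ n₂, w = w₁ ++ w₂ ∧ n₁ + n₂ = n ∧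
      DerivesIn g u₁ (List.map Symbol.terminal w₁) n₁ ∧
      DerivesIn g u₂ (List.map Symbol.terminal w₂) n₂ := by
  obtain ⟨v₁, v₂, n₁, n₂, hv, hn, h1, h2⟩ := h.append_split
  obtain ⟨w₁, w₂, rfl, rfl, rfl⟩ := List.map_eq_append_iff.mp hv
  exact ⟨w₁, w₂, n₁, n₂, rfl, hn, h1, h2⟩

lemma DerivesIn.terminal_single {a : T} {w : List T} {n}
    (h : DerivesIn g [Symbol.terminal a] (List.map Symbol.terminal w) n) :
    w = [a] ∧ n = 0 := by
  have h2 := DerivesIn.terminal_rigid (w := [a]) (by simpa using h)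
  refine ⟨?_, h2.2⟩
  have := h2.1
  rcases w with _ | ⟨b, w'⟩
  · simp at this
  · rcases w' with _ | _
    · simpa [Symbol.terminal.injEq] using congrArg (fun l => l.head?) this
    · exfalso; simpa using congrArg List.length this

/-- From single-nonterminal simulation to string simulation. -/
lemma derives_map_of_nt (g g' : ContextFreeGrammar T)
    (φ : Symbol T g.NT → Symbol T g'.NT)
    (Good : Symbol T g.NT → Prop)
    (hterm : ∀ a, Good (Symbol.terminal a) → g'.Derives [φ (Symbol.terminal a)] [Symbol.terminal a])
    (n : ℕ)
    (IH : ∀ m, m ≤ n → ∀ (A : g.NT) (w : List T), Good (Symbol.nonterminal A) →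
        DerivesIn g [Symbol.nonterminal A] (List.map Symbol.terminal w) m →
        g'.Derives [φ (Symbol.nonterminal A)] (List.map Symbol.terminal w)) :
    ∀ (α : List (Symbol T g.NT)) (w : List T) (m : ℕ), m ≤ n → (∀ x ∈ α, Good x) →
      DerivesIn g α (List.map Symbol.terminal w) m →
      g'.Derives (α.map φ) (List.map Symbol.terminal w) := by
  intro α
  induction α with
  | nil =>
    intro w m _ _ h
    obtain ⟨hw, -⟩ := h.nil_rigid
    obtain rfl : w = [] := by cases w <;> simp_all
    rfl
  | cons x s ih =>
    intro w m hm hGood h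
    obtain ⟨w₁, w₂, n₁, n₂, rfl, hn, h1, h2⟩ :=
      DerivesIn.append_split_word (u₁ := [x]) (u₂ := s) (by simpa using h)
    have hs : g'.Derives (s.map φ) (List.map Symbol.terminal w₂) :=
      ih w₂ n₂ (by omega) (fun y hy => hGood y (List.mem_cons_of_mem x hy)) h2
    have hx : g'.Derives [φ x] (List.map Symbol.terminal w₁) := by
      cases x with
      | terminal a =>
        obtain ⟨rfl, -⟩ := h1.terminal_single
        simpa using hterm a (hGood _ (List.mem_cons_self))
      | nonterminal A =>
        exact IH n₁ (by omega) A w₁ (hGood _ (List.mem_cons_self)) h1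
    simpa using Derives.append_both hx hs


lemma derives_nil_rigid {v : List (Symbol T g.NT)} (h : g.Derives [] v) : v = [] := by
  obtain ⟨n, hn⟩ := derives_iff_derivesIn.mp h
  exact hn.nil_rigid.1

section EpsElim

variable (g : ContextFreeGrammar T)

def Nullable (A : g.NT) : Prop := g.Derives [Symbol.nonterminal A] []

/-- Deleting some nullable nonterminal occurrences. -/
inductive NullSub (g : ContextFreeGrammar T) :
    List (Symbol T g.NT) → List (Symbol T g.NT) → Prop
  | nil : NullSub g [] []
  | keep (x) {l l'} : NullSub g l l' → NullSub g (x :: l) (x :: l')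
  | del {A l l'} : Nullable g A → NullSub g l l' → NullSub g (Symbol.nonterminal A :: l) l'

variable {g}

lemma NullSub.sublist {l l'} (h : NullSub g l l') : l'.Sublist l := by
  induction h with
  | nil => exact List.Sublist.refl _
  | keep x _ ih => exact ih.cons₂ x
  | del _ _ ih => exact ih.cons _

lemma NullSub.derives {l l'} (h : NullSub g l l') : g.Derives l l' := by
  induction h with
  | nil => rfl
  | keep x _ ih => exact ih.append_left [x]
  | del hA _ ih =>
    exact ((hA.append_right _).trans (by simpa using ih) : g.Derives ([Symbol.nonterminal _] ++ _) _)

variable (g)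

def epsRuleSet : Set (ContextFreeRule T g.NT) :=
  {r' | ∃ r ∈ g.rules, r'.input = r.input ∧ NullSub g r.output r'.output ∧ r'.output ≠ []}

lemma epsRuleSet_finite : (epsRuleSet g).Finite := by
  apply Set.Finite.subset
    (Set.Finite.biUnion g.rules.finite_toSet
      (fun r _ => (Set.Finite.ofFinset r.output.sublists.toFinset
        (by simp [List.mem_sublists]) : {o : List (Symbol T g.NT) | o.Sublist r.output}.Finite).image
        (fun o => ContextFreeRule.mk r.input o)))
  rintro r' ⟨r, hr, hin, hsub, -⟩
  exact Set.mem_biUnion hr ⟨r'.output, hsub.sublist, by cases r'; simp_all⟩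

@[reducible] noncomputable def epsElim : ContextFreeGrammar T :=
  ⟨g.NT, g.initial, (epsRuleSet_finite g).toFinset⟩

lemma mem_epsElim {r' : ContextFreeRule T g.NT} :
    r' ∈ (epsElim g).rules ↔ r' ∈ epsRuleSet g :=
  Set.Finite.mem_toFinset _

lemma epsElim_epsFree : ∀ r ∈ (epsElim g).rules, r.output ≠ [] := by
  intro r hr
  exact ((mem_epsElim g).mp hr).choose_spec.2.2.2

lemma epsElim_language_subset : ∀ w ∈ (epsElim g).language, w ∈ g.language := by
  intro w hw
  have := derives_flatMap g (epsElim g) (fun x => [x]) ?_ hw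
  · simpa using this
  · rintro r' hr'
    obtain ⟨r, hr, hin, hsub, -⟩ := (mem_epsElim g).mp hr'
    have h1 : g.Derives [Symbol.nonterminal r'.input] r.output := by
      rw [hin]; exact Produces.single ⟨r, hr, ContextFreeRule.Rewrites.input_output⟩
    simpa using h1.trans hsub.derives

lemma eps_forward_string (n : ℕ)
    (IH : ∀ m, m ≤ n → ∀ (A : g.NT) (w : List T),
      DerivesIn g [Symbol.nonterminal A] (List.map Symbol.terminal w) m → w ≠ [] →
      (epsElim g).Derives [Symbol.nonterminal A] (List.map Symbol.terminal w)) :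
    ∀ (α : List (Symbol T g.NT)) (w : List T) (m : ℕ), m ≤ n →
      DerivesIn g α (List.map Symbol.terminal w) m →
      ∃ α', NullSub g α α' ∧ (epsElim g).Derives α' (List.map Symbol.terminal w) := by
  intro α
  induction α with
  | nil =>
    intro w m _ h
    obtain ⟨hw, -⟩ := h.nil_rigid
    obtain rfl : w = [] := by cases w <;> simp_all
    exact ⟨[], .nil, by rfl⟩
  | cons x s ih =>
    intro w m hm h
    obtain ⟨w₁, w₂, n₁, n₂, rfl, hn, h1, h2⟩ :=
      DerivesIn.append_split_word (u₁ := [x]) (u₂ := s) (by simpa using h)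
    obtain ⟨s', hsub', hder'⟩ := ih w₂ n₂ (by omega) h2
    cases x with
    | terminal a =>
      obtain ⟨rfl, -⟩ := h1.terminal_single
      exact ⟨Symbol.terminal a :: s', .keep _ hsub',
        by simpa using Derives.append_both (Derives.refl [Symbol.terminal a]) hder'⟩
    | nonterminal A =>
      rcases eq_or_ne w₁ [] with rfl | hw₁
      · exact ⟨s', .del (by simpa [Nullable] using h1.derives) hsub', by simpa using hder'⟩
      · refine ⟨Symbol.nonterminal A :: s', .keep _ hsub', ?_⟩
        have hx := IH n₁ (by omega) A w₁ h1 hw₁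
        simpa using Derives.append_both hx hder'

theorem eps_forward_nt (n : ℕ) (A : g.NT) (w : List T)
    (h : DerivesIn g [Symbol.nonterminal A] (List.map Symbol.terminal w) n) (hw : w ≠ []) :
    (epsElim g).Derives [Symbol.nonterminal A] (List.map Symbol.terminal w) := by
  obtain ⟨m, rfl⟩ := h.nt_ne_terminal
  obtain ⟨r, hrmem, rfl, hrest⟩ := h.head_rule
  obtain ⟨α', hsub, hder⟩ := eps_forward_string g m
    (fun k hk A' w' h' hw' => eps_forward_nt k A' w' h' hw') r.output w m le_rfl hrest
  have hne : α' ≠ [] := by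
    rintro rfl
    have := derives_nil_rigid hder
    exact hw (by cases w <;> simp_all)
  have hrule : ContextFreeRule.mk r.input α' ∈ (epsElim g).rules :=
    (mem_epsElim g).mpr ⟨r, hrmem, rfl, hsub, hne⟩
  have hstep : (epsElim g).Produces [Symbol.nonterminal r.input] α' :=
    ⟨_, hrule, by simpa using ContextFreeRule.Rewrites.input_output (r := ContextFreeRule.mk r.input α')⟩
  exact hstep.trans_derives hder
termination_by n
decreasing_by all_goals omega

lemma epsElim_language (hg : [] ∉ g.language) : (epsElim g).language = g.language := by
  apply Set.ext
  intro w
  refine ⟨epsElim_language_subset g w, fun hw => ?_⟩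
  have hwne : w ≠ [] := by rintro rfl; exact hg hw
  obtain ⟨n, hn⟩ := derives_iff_derivesIn.mp hw
  exact eps_forward_nt g n g.initial w hn hwne

end EpsElim


section UnitElim

variable (g : ContextFreeGrammar T)

def UnitStep (A B : g.NT) : Prop := ContextFreeRule.mk A [Symbol.nonterminal B] ∈ g.rules

abbrev UnitChain : g.NT → g.NT → Prop := Relation.ReflTransGen (UnitStep g)

def IsUnit (α : List (Symbol T g.NT)) : Prop := ∃ B : g.NT, α = [Symbol.nonterminal B]

def unitRuleSet : Set (ContextFreeRule T g.NT) :=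
  {r' | ∃ B, ∃ r ∈ g.rules, UnitChain g r'.input B ∧ r.input = B ∧ r.output = r'.output ∧
    ¬ IsUnit g r'.output}

lemma unitRuleSet_finite : (unitRuleSet g).Finite := by
  apply Set.Finite.subset (Set.Finite.image
    (fun p : ContextFreeRule T g.NT × ContextFreeRule T g.NT =>
      ContextFreeRule.mk p.1.input p.2.output)
    (Set.Finite.prod g.rules.finite_toSet g.rules.finite_toSet))
  rintro r' ⟨B, r, hr, hchain, hB, hout, -⟩
  rcases Relation.ReflTransGen.cases_head hchain with heq | ⟨C, hstep, -⟩
  · subst heq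
    exact ⟨(r, r), ⟨hr, hr⟩, by cases r' <;> simp_all⟩
  · exact ⟨(ContextFreeRule.mk r'.input [Symbol.nonterminal C], r), ⟨hstep, hr⟩,
      by cases r' <;> simp_all⟩

@[reducible] noncomputable def unitElim : ContextFreeGrammar T :=
  ⟨g.NT, g.initial, (unitRuleSet_finite g).toFinset⟩

lemma mem_unitElim {r' : ContextFreeRule T g.NT} :
    r' ∈ (unitElim g).rules ↔ r' ∈ unitRuleSet g :=
  Set.Finite.mem_toFinset _

lemma unitElim_epsFree (hg : ∀ r ∈ g.rules, r.output ≠ []) :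
    ∀ r' ∈ (unitElim g).rules, r'.output ≠ [] := by
  intro r' hr'
  obtain ⟨B, r, hr, -, -, hout, -⟩ := (mem_unitElim g).mp hr'
  exact hout ▸ hg r hr

lemma unitElim_unitFree : ∀ r' ∈ (unitElim g).rules, ¬ IsUnit g r'.output := by
  intro r' hr'
  obtain ⟨B, r, hr, -, -, -, hu⟩ := (mem_unitElim g).mp hr'
  exact hu

lemma UnitChain.derives {A B : g.NT} (h : UnitChain g A B) :
    g.Derives [Symbol.nonterminal A] [Symbol.nonterminal B] := by
  induction h with
  | refl => rfl
  | tail _ hstep ih =>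
    exact ih.trans_produces ⟨_, hstep, by
      simpa using ContextFreeRule.Rewrites.input_output (r := ContextFreeRule.mk _ _)⟩

lemma unitElim_language_subset : ∀ w ∈ (unitElim g).language, w ∈ g.language := by
  intro w hw
  have := derives_flatMap g (unitElim g) (fun x => [x]) ?_ hw
  · simpa using this
  · rintro r' hr'
    obtain ⟨B, r, hr, hchain, hB, hout, -⟩ := (mem_unitElim g).mp hr'
    have h2 : g.Derives [Symbol.nonterminal B] r.output := by
      rw [← hB]; exact Produces.single ⟨r, hr, ContextFreeRule.Rewrites.input_output⟩
    simpa [hout] using (UnitChain.derives g hchain).trans h2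

theorem unit_forward_nt (n : ℕ) (A₀ A : g.NT) (w : List T) (hchain : UnitChain g A₀ A)
    (h : DerivesIn g [Symbol.nonterminal A] (List.map Symbol.terminal w) n) :
    (unitElim g).Derives [Symbol.nonterminal A₀] (List.map Symbol.terminal w) := by
  obtain ⟨m, rfl⟩ := h.nt_ne_terminal
  obtain ⟨r, hrmem, hin, hrest⟩ := h.head_rule
  by_cases hu : IsUnit g r.output
  · obtain ⟨B, hB⟩ := hu
    have hstep : UnitStep g A B := by
      have : r = ContextFreeRule.mk A [Symbol.nonterminal B] := by
        cases r; simp_all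
      show ContextFreeRule.mk A [Symbol.nonterminal B] ∈ g.rules
      exact this ▸ hrmem
    rw [hB] at hrest
    exact unit_forward_nt m A₀ B w (hchain.tail hstep) hrest
  · have hrule : ContextFreeRule.mk A₀ r.output ∈ (unitElim g).rules :=
      (mem_unitElim g).mpr ⟨A, r, hrmem, hchain, hin, rfl, hu⟩
    have hder : (unitElim g).Derives (r.output.map id) (List.map Symbol.terminal w) := by
      refine derives_map_of_nt g (unitElim g) id (fun _ => True) (fun a _ => by rfl) m
        (fun k hk B w' _ h' => unit_forward_nt k B B w' Relation.ReflTransGen.refl h')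
        r.output w m le_rfl (fun _ _ => trivial) hrest
    have hstep : (unitElim g).Produces [Symbol.nonterminal A₀] r.output :=
      ⟨_, hrule, by simpa using
        ContextFreeRule.Rewrites.input_output (r := ContextFreeRule.mk A₀ r.output)⟩
    exact hstep.trans_derives (by simpa using hder)
termination_by n
decreasing_by all_goals omega

lemma unitElim_language : (unitElim g).language = g.language := by
  apply Set.ext
  intro w
  refine ⟨unitElim_language_subset g w, fun hw => ?_⟩
  obtain ⟨n, hn⟩ := derives_iff_derivesIn.mp hw
  exact unit_forward_nt g n g.initial g.initial w Relation.ReflTransGen.refl hn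

end UnitElim


lemma produces_head {g : ContextFreeGrammar T} {r : ContextFreeRule T g.NT} (hr : r ∈ g.rules)
    (q : List (Symbol T g.NT)) :
    g.Produces (Symbol.nonterminal r.input :: q) (r.output ++ q) :=
  ⟨r, hr, ContextFreeRule.Rewrites.head q⟩

lemma produces_rule {g : ContextFreeGrammar T} {r : ContextFreeRule T g.NT} (hr : r ∈ g.rules) :
    g.Produces [Symbol.nonterminal r.input] r.output :=
  ⟨r, hr, ContextFreeRule.Rewrites.input_output⟩

section LeftCorner

variable (g : ContextFreeGrammar.{0} T)

def usedN : Set g.NT :=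
  {g.initial} ∪ ⋃ r ∈ (g.rules : Set (ContextFreeRule T g.NT)),
    ({r.input} ∪ {A | Symbol.nonterminal A ∈ r.output})

def usedT : Set T :=
  ⋃ r ∈ (g.rules : Set (ContextFreeRule T g.NT)), {a | Symbol.terminal a ∈ r.output}

lemma usedN_finite : (usedN g).Finite := by
  refine Set.Finite.union (Set.finite_singleton _)
    (Set.Finite.biUnion g.rules.finite_toSet fun r _ => Set.Finite.union (Set.finite_singleton _)
      (Set.Finite.subset (Set.Finite.image (fun x : Symbol T g.NT =>
        match x with | Symbol.nonterminal A => A | _ => g.initial) r.output.finite_toSet) ?_))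
  rintro A hA
  exact ⟨Symbol.nonterminal A, hA, rfl⟩

lemma usedT_finite : (usedT g).Finite := by
  refine Set.Finite.biUnion g.rules.finite_toSet fun r _ =>
    Set.Finite.ofFinset (r.output.filterMap fun x =>
      match x with | Symbol.terminal a => some a | _ => none).toFinset ?_
  intro a
  simp only [List.mem_toFinset, List.mem_filterMap, Set.mem_setOf_eq]
  constructor
  · rintro ⟨x, hx, hax⟩
    cases x <;> simp_all
  · intro ha
    exact ⟨Symbol.terminal a, ha, rfl⟩

lemma initial_mem_usedN : g.initial ∈ usedN g := Or.inl rfl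

lemma input_mem_usedN {r : ContextFreeRule T g.NT} (hr : r ∈ g.rules) : r.input ∈ usedN g :=
  Or.inr (Set.mem_biUnion hr (Or.inl rfl))

lemma output_nt_mem_usedN {r : ContextFreeRule T g.NT} (hr : r ∈ g.rules) {A : g.NT}
    (hA : Symbol.nonterminal A ∈ r.output) : A ∈ usedN g :=
  Or.inr (Set.mem_biUnion hr (Or.inr hA))

lemma output_t_mem_usedT {r : ContextFreeRule T g.NT} (hr : r ∈ g.rules) {a : T}
    (ha : Symbol.terminal a ∈ r.output) : a ∈ usedT g :=
  Set.mem_biUnion hr ha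

/-- Nonterminals of the left-corner grammar. -/
abbrev lcNT : Type := g.NT ⊕ (g.NT × Symbol T g.NT)

/-- Embedding of sentential forms. -/
def embS : Symbol T g.NT → Symbol T (lcNT g)
  | Symbol.terminal a => Symbol.terminal a
  | Symbol.nonterminal A => Symbol.nonterminal (Sum.inl A)

def GoodSym (x : Symbol T g.NT) : Prop :=
  (∀ a, x = Symbol.terminal a → a ∈ usedT g) ∧ (∀ A, x = Symbol.nonterminal A → A ∈ usedN g)

lemma goodSym_of_output {r : ContextFreeRule T g.NT} (hr : r ∈ g.rules) {x : Symbol T g.NT}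
    (hx : x ∈ r.output) : GoodSym g x :=
  ⟨fun a ha => output_t_mem_usedT g hr (ha ▸ hx), fun A hA => output_nt_mem_usedN g hr (hA ▸ hx)⟩

def lcRuleSet : Set (ContextFreeRule T (lcNT g)) :=
  {r' | ∃ A ∈ usedN g, ∃ a ∈ usedT g,
      r' = ContextFreeRule.mk (Sum.inl A)
        [Symbol.terminal a, Symbol.nonterminal (Sum.inr (A, Symbol.terminal a))]} ∪
  {r' | ∃ A ∈ usedN g, ∃ r ∈ g.rules, ∃ X β, r.output = X :: β ∧
      r' = ContextFreeRule.mk (Sum.inr (A, X))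
        (β.map (embS g) ++ [Symbol.nonterminal (Sum.inr (A, Symbol.nonterminal r.input))])} ∪
  {r' | ∃ A ∈ usedN g, r' = ContextFreeRule.mk (Sum.inr (A, Symbol.nonterminal A)) []}

lemma lcRuleSet_finite : (lcRuleSet g).Finite := by
  refine Set.Finite.union (Set.Finite.union ?_ ?_) ?_
  · refine Set.Finite.subset (Set.Finite.image (fun p : g.NT × T =>
      ContextFreeRule.mk (Sum.inl p.1)
        [Symbol.terminal p.2, Symbol.nonterminal (Sum.inr (p.1, Symbol.terminal p.2))])
      ((usedN_finite g).prod (usedT_finite g))) ?_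
    rintro r' ⟨A, hA, a, ha, rfl⟩
    exact ⟨(A, a), ⟨hA, ha⟩, rfl⟩
  · refine Set.Finite.subset (Set.Finite.image (fun p : g.NT × ContextFreeRule T g.NT =>
      match p.2.output with
      | X :: β => ContextFreeRule.mk (Sum.inr (p.1, X))
          (β.map (embS g) ++ [Symbol.nonterminal (Sum.inr (p.1, Symbol.nonterminal p.2.input))])
      | [] => ContextFreeRule.mk (Sum.inr (p.1, Symbol.nonterminal p.1)) [])
      ((usedN_finite g).prod g.rules.finite_toSet)) ?_
    rintro r' ⟨A, hA, r, hr, X, β, hout, rfl⟩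
    exact ⟨(A, r), ⟨hA, hr⟩, by simp only [hout]⟩
  · refine Set.Finite.subset (Set.Finite.image (fun A : g.NT =>
      ContextFreeRule.mk (Sum.inr (A, Symbol.nonterminal A)) []) (usedN_finite g)) ?_
    rintro r' ⟨A, hA, rfl⟩
    exact ⟨A, hA, rfl⟩

@[reducible] noncomputable def lcg : ContextFreeGrammar T :=
  ⟨lcNT g, Sum.inl g.initial, (lcRuleSet_finite g).toFinset⟩

lemma mem_lcg {r' : ContextFreeRule T (lcNT g)} :
    r' ∈ (lcg g).rules ↔ r' ∈ lcRuleSet g :=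
  Set.Finite.mem_toFinset _

lemma lcg_rule1 {A : g.NT} (hA : A ∈ usedN g) {a : T} (ha : a ∈ usedT g) :
    ContextFreeRule.mk (Sum.inl A)
      [Symbol.terminal a, Symbol.nonterminal (Sum.inr (A, Symbol.terminal a))] ∈ (lcg g).rules :=
  (mem_lcg g).mpr (Or.inl (Or.inl ⟨A, hA, a, ha, rfl⟩))

lemma lcg_rule2 {A : g.NT} (hA : A ∈ usedN g) {r : ContextFreeRule T g.NT} (hr : r ∈ g.rules)
    {X β} (hout : r.output = X :: β) :
    ContextFreeRule.mk (Sum.inr (A, X))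
      (β.map (embS g) ++ [Symbol.nonterminal (Sum.inr (A, Symbol.nonterminal r.input))])
      ∈ (lcg g).rules :=
  (mem_lcg g).mpr (Or.inl (Or.inr ⟨A, hA, r, hr, X, β, hout, rfl⟩))

lemma lcg_rule3 {A : g.NT} (hA : A ∈ usedN g) :
    ContextFreeRule.mk (Sum.inr (A, Symbol.nonterminal A)) [] ∈ (lcg g).rules :=
  (mem_lcg g).mpr (Or.inr ⟨A, hA, rfl⟩)

lemma lcg_pair_nil {A : g.NT} (hA : A ∈ usedN g) :
    (lcg g).Derives [Symbol.nonterminal (Sum.inr (A, Symbol.nonterminal A))] [] :=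
  Produces.single (by simpa using produces_rule (lcg_rule3 g hA))

theorem lc_forward (hge : ∀ r ∈ g.rules, r.output ≠ []) (n : ℕ) (X : Symbol T g.NT)
    (hX : GoodSym g X) (w : List T)
    (h : DerivesIn g [X] (List.map Symbol.terminal w) n) (C : g.NT) (hC : C ∈ usedN g)
    (u : List T)
    (hu : (lcg g).Derives [Symbol.nonterminal (Sum.inr (C, X))] (List.map Symbol.terminal u)) :
    (lcg g).Derives [Symbol.nonterminal (Sum.inl C)] (List.map Symbol.terminal (w ++ u)) := by
  cases X with
  | terminal a =>
    obtain ⟨rfl, -⟩ := h.terminal_single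
    have hstep := produces_rule (lcg_rule1 g hC (hX.1 a rfl))
    refine (Produces.trans_derives (by simpa using hstep)) ?_
    have : (lcg g).Derives ([Symbol.terminal a] ++
        [Symbol.nonterminal (Sum.inr (C, Symbol.terminal a))])
        ([Symbol.terminal a] ++ List.map Symbol.terminal u) := hu.append_left _
    simpa using this
  | nonterminal B =>
    obtain ⟨m, rfl⟩ := h.nt_ne_terminal
    obtain ⟨r, hrmem, hin, hrest⟩ := h.head_rule
    obtain ⟨Y, β, hout⟩ : ∃ Y β, r.output = Y :: β := by
      rcases hYβ : r.output with _ | ⟨Y, β⟩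
      · exact absurd hYβ (hge r hrmem)
      · exact ⟨Y, β, rfl⟩
    rw [hout] at hrest
    obtain ⟨w₁, w₂, n₁, n₂, rfl, hn, h1, h2⟩ :=
      DerivesIn.append_split_word (u₁ := [Y]) (u₂ := β) (by simpa using hrest)
    -- β derivation transported
    have hβ : (lcg g).Derives (β.map (embS g)) (List.map Symbol.terminal w₂) := by
      refine derives_map_of_nt g (lcg g) (embS g) (GoodSym g)
        (fun a _ => by simp only [embS]; rfl) n₂ (fun k hk A' w' hg' h' => ?_) β w₂ n₂ le_rfl
        (fun x hx => goodSym_of_output g hrmem (hout ▸ List.mem_cons_of_mem Y hx)) h2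
      have hA' : A' ∈ usedN g := hg'.2 A' rfl
      have := lc_forward hge k (Symbol.nonterminal A') hg' w' h' A' hA' []
        (by simpa using lcg_pair_nil g hA')
      simpa [embS] using this
    -- rule 2 application
    have hrule := lcg_rule2 g hC hrmem hout
    have hstep : (lcg g).Produces [Symbol.nonterminal (Sum.inr (C, Y))]
        (β.map (embS g) ++ [Symbol.nonterminal (Sum.inr (C, Symbol.nonterminal r.input))]) := by
      simpa using produces_rule hrule
    rw [hin] at hstep
    have h2' : (lcg g).Derives [Symbol.nonterminal (Sum.inr (C, Y))]
        (List.map Symbol.terminal (w₂ ++ u)) := by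
      refine hstep.trans_derives ?_
      have := Derives.append_both hβ hu
      simpa using this
    have := lc_forward hge n₁ Y (goodSym_of_output g hrmem (hout ▸ List.mem_cons_self))
      w₁ h1 C hC (w₂ ++ u) h2'
    simpa using this
termination_by n
decreasing_by all_goals omega

def lcBack (d : g.NT) : Symbol T (lcNT g) → Symbol T g.NT
  | Symbol.terminal a => Symbol.terminal a
  | Symbol.nonterminal (Sum.inl A) => Symbol.nonterminal A
  | Symbol.nonterminal (Sum.inr _) => Symbol.nonterminal d

lemma lcBack_emb (d : g.NT) (β : List (Symbol T g.NT)) :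
    (β.map (embS g)).map (lcBack g d) = β := by
  induction β with
  | nil => rfl
  | cons x s ih => cases x <;> simp [embS, lcBack, ih]

mutual

theorem lc_back_orig (n : ℕ) (C : g.NT) (w : List T)
    (h : DerivesIn (lcg g) [Symbol.nonterminal (Sum.inl C)] (List.map Symbol.terminal w) n) :
    g.Derives [Symbol.nonterminal C] (List.map Symbol.terminal w) := by
  obtain ⟨m, rfl⟩ := h.nt_ne_terminal
  obtain ⟨r', hr'mem, hin, hrest⟩ := h.head_rule
  rcases (mem_lcg g).mp hr'mem with (⟨A, hA, a, ha, rfl⟩ | ⟨A, hA, r, hr, X, β, hout, rfl⟩) |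
    ⟨A, hA, rfl⟩
  · -- type 1
    obtain rfl : C = A := (Sum.inl.inj (show Sum.inl A = Sum.inl C from hin)).symm
    obtain ⟨w₁, w₂, n₁, n₂, rfl, hn, h1, h2⟩ :=
      DerivesIn.append_split_word (u₁ := [Symbol.terminal a]) (u₂ := _) (by simpa using hrest)
    obtain ⟨rfl, -⟩ := h1.terminal_single
    have h2' := lc_back_pair n₂ C (Symbol.terminal a) w₂ h2
    simpa using h2'
  · exact absurd hin (by simp)
  · exact absurd hin (by simp)
termination_by n
decreasing_by all_goals omega

theorem lc_back_pair (n : ℕ) (C : g.NT) (X : Symbol T g.NT) (u : List T)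
    (h : DerivesIn (lcg g) [Symbol.nonterminal (Sum.inr (C, X))]
      (List.map Symbol.terminal u) n) :
    g.Derives [Symbol.nonterminal C] (X :: List.map Symbol.terminal u) := by
  obtain ⟨m, rfl⟩ := h.nt_ne_terminal
  obtain ⟨r', hr'mem, hin, hrest⟩ := h.head_rule
  rcases (mem_lcg g).mp hr'mem with (⟨A, hA, a, ha, rfl⟩ | ⟨A, hA, r, hr, X', β, hout, rfl⟩) |
    ⟨A, hA, rfl⟩
  · exact absurd hin (by simp)
  · -- type 2
    have hpair := Prod.ext_iff.mp (Sum.inr.inj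
      (show Sum.inr (A, X') = Sum.inr (C, X) from hin))
    obtain ⟨rfl, rfl⟩ : C = A ∧ X = X' := ⟨hpair.1.symm, hpair.2.symm⟩
    obtain ⟨u₁, u₂, n₁, n₂, rfl, hn, h1, h2⟩ := DerivesIn.append_split_word hrest
    have hβ : g.Derives β (List.map Symbol.terminal u₁) := by
      have := derives_map_of_nt (lcg g) g (lcBack g C)
        (fun x => ∀ p, x ≠ Symbol.nonterminal (Sum.inr p))
        (fun a _ => by simp only [lcBack]; rfl) n₁ (fun k hk A' w' hg' h' => ?_)
        (β.map (embS g)) u₁ n₁ le_rfl (fun x hx => ?_) h1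
      · rwa [lcBack_emb] at this
      · rcases A' with A' | p'
        · exact lc_back_orig k A' w' h'
        · exact absurd rfl (hg' p')
      · simp only [List.mem_map] at hx
        obtain ⟨y, -, rfl⟩ := hx
        cases y <;> simp [embS]
    have h2' := lc_back_pair n₂ C (Symbol.nonterminal r.input) u₂ h2
    -- assemble: C ⇒* B u₂ ⇒ (X::β) u₂ ⇒* X u₁ u₂
    have hstep : g.Produces (Symbol.nonterminal r.input :: List.map Symbol.terminal u₂)
        (r.output ++ List.map Symbol.terminal u₂) := produces_head hr _
    rw [hout] at hstep
    have hfin : g.Derives ((X :: β) ++ List.map Symbol.terminal u₂)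
        (X :: (List.map Symbol.terminal u₁ ++ List.map Symbol.terminal u₂)) := by
      have := (Derives.append_both hβ (Derives.refl (List.map Symbol.terminal u₂))).append_left [X]
      simpa using this
    have := (h2'.trans_produces hstep).trans hfin
    simpa using this
  · -- type 3
    have hpair := Prod.ext_iff.mp (Sum.inr.inj
      (show Sum.inr (A, Symbol.nonterminal A) = Sum.inr (C, X) from hin))
    obtain ⟨rfl, rfl⟩ : C = A ∧ X = Symbol.nonterminal A := ⟨hpair.1.symm, hpair.2.symm⟩
    obtain ⟨hnil, -⟩ := hrest.nil_rigid
    obtain rfl : u = [] := by cases u <;> simp_all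
    simp only [List.map_nil, List.map_cons]
    rfl
termination_by n
decreasing_by all_goals omega

end

lemma lcg_language (hge : ∀ r ∈ g.rules, r.output ≠ []) : (lcg g).language = g.language := by
  apply Set.ext
  intro w
  constructor
  · intro hw
    obtain ⟨n, hn⟩ := derives_iff_derivesIn.mp hw
    exact lc_back_orig g n g.initial w hn
  · intro hw
    obtain ⟨n, hn⟩ := derives_iff_derivesIn.mp hw
    have := lc_forward g hge n (Symbol.nonterminal g.initial)
      ⟨fun a h => by simp at h, fun A hA => by
        rw [← Symbol.nonterminal.inj hA]; exact initial_mem_usedN g⟩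
      w hn g.initial (initial_mem_usedN g) []
      (by simpa using lcg_pair_nil g (initial_mem_usedN g))
    exact (mem_language_iff _ _).mpr (by simpa using this)

end LeftCorner


/-- Terminal-initial rules. -/
def TI {N : Type} (r : ContextFreeRule T N) : Prop :=
  ∃ a δ, r.output = Symbol.terminal a :: δ

section StepClosure

variable (g : ContextFreeGrammar.{0} T)

def stepRuleSet : Set (ContextFreeRule T g.NT) :=
  {r | r ∈ g.rules ∧ TI r} ∪
  {r' | ∃ r ∈ g.rules, ∃ B δ, r.output = Symbol.nonterminal B :: δ ∧
    ∃ r₂ ∈ g.rules, r₂.input = B ∧ r' = ContextFreeRule.mk r.input (r₂.output ++ δ)}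

lemma stepRuleSet_finite : (stepRuleSet g).Finite := by
  refine Set.Finite.union (g.rules.finite_toSet.subset fun r hr => hr.1) ?_
  refine Set.Finite.subset (Set.Finite.image
    (fun p : ContextFreeRule T g.NT × ContextFreeRule T g.NT =>
      ContextFreeRule.mk p.1.input (p.2.output ++ p.1.output.tail))
    (g.rules.finite_toSet.prod g.rules.finite_toSet)) ?_
  rintro r' ⟨r, hr, B, δ, hout, r₂, hr₂, hB, rfl⟩
  exact ⟨(r, r₂), ⟨hr, hr₂⟩, by simp [hout]⟩

@[reducible] noncomputable def stepG : ContextFreeGrammar T :=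
  ⟨g.NT, g.initial, (stepRuleSet_finite g).toFinset⟩

lemma mem_stepG {r' : ContextFreeRule T g.NT} :
    r' ∈ (stepG g).rules ↔ r' ∈ stepRuleSet g :=
  Set.Finite.mem_toFinset _

lemma stepG_epsFree (hg : ∀ r ∈ g.rules, r.output ≠ []) :
    ∀ r' ∈ (stepG g).rules, r'.output ≠ [] := by
  intro r' hr'
  rcases (mem_stepG g).mp hr' with ⟨hmem, a, δ, hout⟩ | ⟨r, hr, B, δ, hout, r₂, hr₂, hB, rfl⟩
  · simp [hout]
  · simpa using fun h _ => hg r₂ hr₂ h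

lemma stepG_language_subset : ∀ w ∈ (stepG g).language, w ∈ g.language := by
  intro w hw
  have := derives_flatMap g (stepG g) (fun x => [x]) ?_ hw
  · simpa using this
  · rintro r' hr'
    rcases (mem_stepG g).mp hr' with ⟨hmem, -⟩ | ⟨r, hr, B, δ, hout, r₂, hr₂, hB, rfl⟩
    · simpa using Produces.single (produces_rule hmem)
    · have h1 : g.Produces [Symbol.nonterminal r.input] (Symbol.nonterminal B :: δ) := by
        have := produces_rule hr
        rwa [hout] at this
      have h2 : g.Produces (Symbol.nonterminal B :: δ) (r₂.output ++ δ) := by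
        rw [← hB]; exact produces_head hr₂ δ
      simpa using (h1.trans_derives h2.single)

theorem step_forward_nt (hg : ∀ r ∈ g.rules, r.output ≠ []) (n : ℕ) (A : g.NT) (w : List T)
    (h : DerivesIn g [Symbol.nonterminal A] (List.map Symbol.terminal w) n) :
    (stepG g).Derives [Symbol.nonterminal A] (List.map Symbol.terminal w) := by
  obtain ⟨m, rfl⟩ := h.nt_ne_terminal
  obtain ⟨r, hrmem, hin, hrest⟩ := h.head_rule
  obtain ⟨out, k, hk, hrule, hder⟩ : ∃ out k, k < m + 1 ∧
      ContextFreeRule.mk A out ∈ (stepG g).rules ∧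
      DerivesIn g out (List.map Symbol.terminal w) k := by
    rcases hout : r.output with _ | ⟨x, δ⟩
    · exact absurd hout (hg r hrmem)
    · cases x with
      | terminal a =>
        refine ⟨r.output, m, by omega, ?_, hrest⟩
        have : ContextFreeRule.mk A r.output = r := by cases r; simp_all
        rw [this]
        exact (mem_stepG g).mpr (Or.inl ⟨hrmem, a, δ, hout⟩)
      | nonterminal B =>
        rw [hout] at hrest
        obtain ⟨w₁, w₂, n₁, n₂, hw, hn, h1, h2⟩ :=
          DerivesIn.append_split_word (u₁ := [Symbol.nonterminal B]) (u₂ := δ)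
            (by simpa using hrest)
        obtain ⟨k₁, rfl⟩ := h1.nt_ne_terminal
        obtain ⟨r₂, hr₂mem, hr₂in, h1'⟩ := h1.head_rule
        refine ⟨r₂.output ++ δ, k₁ + n₂, by omega, ?_, ?_⟩
        · exact (mem_stepG g).mpr (Or.inr ⟨r, hrmem, B, δ, hout,
            r₂, hr₂mem, hr₂in, by rw [hin]⟩)
        · rw [hw, List.map_append]
          exact (h1'.append_right δ).trans (h2.append_left _)
  have hmap := derives_map_of_nt g (stepG g) id (fun _ => True)
    (fun a _ => by rfl) k
    (fun k' hk' B w' _ h' => step_forward_nt hg k' B w' h')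
    out w k le_rfl (fun _ _ => trivial) hder
  have hstep : (stepG g).Produces [Symbol.nonterminal A] out := by
    simpa using produces_rule hrule
  exact hstep.trans_derives (by simpa using hmap)
termination_by n
decreasing_by all_goals omega

lemma stepG_language (hg : ∀ r ∈ g.rules, r.output ≠ []) :
    (stepG g).language = g.language := by
  apply Set.ext
  intro w
  refine ⟨stepG_language_subset g w, fun hw => ?_⟩
  obtain ⟨n, hn⟩ := derives_iff_derivesIn.mp hw
  exact step_forward_nt g hg n g.initial w hn

end StepClosure


section Lift

variable (g : ContextFreeGrammar.{0} T)

abbrev liftNT : Type := g.NT ⊕ T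

def liftSym : Symbol T g.NT → Symbol T (liftNT g)
  | Symbol.terminal b => Symbol.nonterminal (Sum.inr b)
  | Symbol.nonterminal B => Symbol.nonterminal (Sum.inl B)

def liftRuleSet : Set (ContextFreeRule T (liftNT g)) :=
  {r' | ∃ r ∈ g.rules, ∃ a δ, r.output = Symbol.terminal a :: δ ∧
    r' = ContextFreeRule.mk (Sum.inl r.input) (Symbol.terminal a :: δ.map (liftSym g))} ∪
  {r' | ∃ b ∈ usedT g, r' = ContextFreeRule.mk (Sum.inr b) [Symbol.terminal b]}

lemma liftRuleSet_finite : (liftRuleSet g).Finite := by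
  refine Set.Finite.union ?_ ?_
  · refine Set.Finite.subset (Set.Finite.image (fun r : ContextFreeRule T g.NT =>
      ContextFreeRule.mk (Sum.inl r.input) (match r.output with
        | Symbol.terminal a :: δ => Symbol.terminal a :: δ.map (liftSym g)
        | _ => []))
      g.rules.finite_toSet) ?_
    rintro r' ⟨r, hr, a, δ, hout, rfl⟩
    exact ⟨r, hr, by simp only [hout]⟩
  · refine Set.Finite.subset (Set.Finite.image (fun b : T =>
      ContextFreeRule.mk (Sum.inr b) [Symbol.terminal b]) (usedT_finite g)) ?_
    rintro r' ⟨b, hb, rfl⟩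
    exact ⟨b, hb, rfl⟩

@[reducible] noncomputable def liftG : ContextFreeGrammar T :=
  ⟨liftNT g, Sum.inl g.initial, (liftRuleSet_finite g).toFinset⟩

lemma mem_liftG {r' : ContextFreeRule T (liftNT g)} :
    r' ∈ (liftG g).rules ↔ r' ∈ liftRuleSet g :=
  Set.Finite.mem_toFinset _

lemma liftG_gnf : InGNF (liftG g) := by
  intro r' hr'
  rcases (mem_liftG g).mp hr' with ⟨r, hr, a, δ, hout, rfl⟩ | ⟨b, hb, rfl⟩
  · refine ⟨a, δ.map (fun x => match x with
      | Symbol.terminal b => Sum.inr b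
      | Symbol.nonterminal B => Sum.inl B), ?_⟩
    simp only [List.map_map]
    congr 1
    apply List.map_congr_left
    intro x hx
    cases x <;> rfl
  · exact ⟨b, [], rfl⟩

def liftBack : Symbol T (liftNT g) → List (Symbol T g.NT)
  | Symbol.terminal a => [Symbol.terminal a]
  | Symbol.nonterminal (Sum.inl B) => [Symbol.nonterminal B]
  | Symbol.nonterminal (Sum.inr b) => [Symbol.terminal b]

lemma liftBack_liftSym (δ : List (Symbol T g.NT)) :
    (δ.map (liftSym g)).flatMap (liftBack g) = δ := by
  induction δ with
  | nil => rfl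
  | cons x s ih => cases x <;> simp [liftSym, liftBack, ih]

lemma flatMap_liftBack_terminal (w : List T) :
    (List.map Symbol.terminal w).flatMap (liftBack g) = List.map Symbol.terminal w := by
  induction w with
  | nil => rfl
  | cons a w ih => simp only [List.map_cons, List.flatMap_cons, ih]; rfl

lemma liftG_language_subset : ∀ w ∈ (liftG g).language, w ∈ g.language := by
  intro w hw
  have hd := derives_flatMap g (liftG g) (liftBack g) ?_ hw
  · rw [flatMap_liftBack_terminal] at hd
    exact hd
  · rintro r' hr'
    rcases (mem_liftG g).mp hr' with ⟨r, hr, a, δ, hout, rfl⟩ | ⟨b, hb, rfl⟩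
    · show g.Derives (liftBack g (Symbol.nonterminal (Sum.inl r.input)))
        ((Symbol.terminal a :: δ.map (liftSym g)).flatMap (liftBack g))
      rw [List.flatMap_cons, liftBack_liftSym]
      have hp : g.Produces [Symbol.nonterminal r.input] (Symbol.terminal a :: δ) := by
        have := produces_rule hr; rwa [hout] at this
      simpa [liftBack] using hp.single
    · exact Derives.refl _

theorem lift_forward_nt (hTI : ∀ r ∈ g.rules, TI r) (n : ℕ) (A : g.NT) (w : List T)
    (h : DerivesIn g [Symbol.nonterminal A] (List.map Symbol.terminal w) n) :
    (liftG g).Derives [Symbol.nonterminal (Sum.inl A)] (List.map Symbol.terminal w) := by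
  obtain ⟨m, rfl⟩ := h.nt_ne_terminal
  obtain ⟨r, hrmem, hin, hrest⟩ := h.head_rule
  obtain ⟨a, δ, hout⟩ := hTI r hrmem
  rw [hout] at hrest
  obtain ⟨w₁, w₂, n₁, n₂, hw, hn, h1, h2⟩ :=
    DerivesIn.append_split_word (u₁ := [Symbol.terminal a]) (u₂ := δ) (by simpa using hrest)
  obtain ⟨rfl, -⟩ := h1.terminal_single
  have hδ : (liftG g).Derives (δ.map (liftSym g)) (List.map Symbol.terminal w₂) := by
    refine derives_map_of_nt g (liftG g) (liftSym g)
      (fun x => ∀ b, x = Symbol.terminal b → b ∈ usedT g) ?_ n₂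
      (fun k hk B w' _ h' => lift_forward_nt hTI k B w' h') δ w₂ n₂ le_rfl
      (fun x hx b hxb => output_t_mem_usedT g hrmem (hout ▸ (hxb ▸ List.mem_cons_of_mem _ hx))) h2
    · intro b hb
      have hrule := (mem_liftG g).mpr (Or.inr ⟨b, hb b rfl, rfl⟩)
      exact (Produces.single (by simpa [liftSym] using produces_rule hrule) : _)
  have hrule := (mem_liftG g).mpr (Or.inl ⟨r, hrmem, a, δ, hout, rfl⟩)
  have hstep : (liftG g).Produces [Symbol.nonterminal (Sum.inl r.input)]
      (Symbol.terminal a :: δ.map (liftSym g)) := by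
    simpa using produces_rule hrule
  rw [hin] at hstep
  refine hstep.trans_derives ?_
  rw [hw]
  have := hδ.append_left [Symbol.terminal a]
  simpa using this
termination_by n
decreasing_by all_goals omega

lemma liftG_language (hTI : ∀ r ∈ g.rules, TI r) : (liftG g).language = g.language := by
  apply Set.ext
  intro w
  refine ⟨liftG_language_subset g w, fun hw => ?_⟩
  obtain ⟨n, hn⟩ := derives_iff_derivesIn.mp hw
  exact lift_forward_nt g hTI n g.initial w hn

end Lift

section Relabel

universe u
variable (g : ContextFreeGrammar.{0} T)

def upSym : Symbol T g.NT → Symbol T (ULift.{0} g.NT)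
  | Symbol.terminal a => Symbol.terminal a
  | Symbol.nonterminal A => Symbol.nonterminal (ULift.up A)

@[reducible] noncomputable def relabelG : ContextFreeGrammar T :=
  ⟨ULift.{0} g.NT, ULift.up g.initial,
    g.rules.image (fun r => ContextFreeRule.mk (ULift.up r.input) (r.output.map (upSym g)))⟩

def downSym : Symbol T (ULift.{0} g.NT) → List (Symbol T g.NT)
  | Symbol.terminal a => [Symbol.terminal a]
  | Symbol.nonterminal A => [Symbol.nonterminal A.down]

lemma downSym_upSym (δ : List (Symbol T g.NT)) :
    (δ.map (upSym g)).flatMap (downSym g) = δ := by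
  induction δ with
  | nil => rfl
  | cons x s ih => cases x <;> simp [upSym, downSym, ih]

def upSymL : Symbol T g.NT → List (Symbol T (ULift.{0} g.NT)) := fun x => [upSym g x]

lemma upSymL_flat (δ : List (Symbol T g.NT)) :
    δ.flatMap (upSymL g) = δ.map (upSym g) := by
  induction δ with
  | nil => rfl
  | cons x s ih => simp [upSymL, ih]

lemma relabelG_gnf (hg : InGNF g) : InGNF (relabelG g) := by
  intro r' hr'
  obtain ⟨r, hr, rfl⟩ := Finset.mem_image.mp hr'
  obtain ⟨a, γ, hout⟩ := hg r hr
  refine ⟨a, γ.map ULift.up, ?_⟩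
  simp [hout, upSym, List.map_map]

lemma flatMap_downSym_terminal (w : List T) :
    (List.map Symbol.terminal w).flatMap (downSym g) = List.map Symbol.terminal w := by
  induction w with
  | nil => rfl
  | cons a w ih => simp only [List.map_cons, List.flatMap_cons, ih]; rfl

lemma flatMap_upSymL_terminal (w : List T) :
    (List.map Symbol.terminal w).flatMap (upSymL g) = List.map Symbol.terminal w := by
  induction w with
  | nil => rfl
  | cons a w ih => simp only [List.map_cons, List.flatMap_cons, ih]; rfl

lemma relabelG_language : (relabelG g).language = g.language := by
  apply Set.ext
  intro w
  constructor
  · intro hw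
    have hd := derives_flatMap g (relabelG g) (downSym g) ?_ hw
    · rw [flatMap_downSym_terminal] at hd
      exact hd
    · rintro r' hr'
      obtain ⟨r, hr, rfl⟩ := Finset.mem_image.mp hr'
      show g.Derives (downSym g (Symbol.nonterminal (ULift.up r.input)))
        ((r.output.map (upSym g)).flatMap (downSym g))
      rw [downSym_upSym]
      exact (produces_rule hr).single
  · intro hw
    have hd := derives_flatMap (relabelG g) g (upSymL g) ?_ hw
    · rw [flatMap_upSymL_terminal] at hd
      exact hd
    · rintro r hr
      show (relabelG g).Derives (upSymL g (Symbol.nonterminal r.input))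
        (r.output.flatMap (upSymL g))
      rw [upSymL_flat]
      have hrule : ContextFreeRule.mk (ULift.up r.input) (r.output.map (upSym g))
          ∈ (relabelG g).rules := Finset.mem_image.mpr ⟨r, hr, rfl⟩
      exact (produces_rule hrule).single

end Relabel


section Shapes

variable (g : ContextFreeGrammar.{0} T)

lemma NullSub.nil_left {g' : ContextFreeGrammar T} {res : List (Symbol T g'.NT)}
    (h : NullSub g' [] res) : res = [] := by cases h; rfl

lemma nullSub_append_invariant {g' : ContextFreeGrammar T}
    {l₁ l₂ res : List (Symbol T g'.NT)} (h : NullSub g' (l₁ ++ l₂) res)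
    (hl : ∀ A, Symbol.nonterminal A ∈ l₁ → ¬ Nullable g' A) :
    ∃ res₂, res = l₁ ++ res₂ ∧ NullSub g' l₂ res₂ := by
  induction l₁ generalizing res with
  | nil => exact ⟨res, rfl, by simpa using h⟩
  | cons x s ih =>
    rw [List.cons_append] at h
    cases h with
    | keep _ h' =>
      obtain ⟨res₂, rfl, hns⟩ := ih h' (fun A hA => hl A (List.mem_cons_of_mem x hA))
      exact ⟨res₂, rfl, hns⟩
    | del hA h' =>
      exact absurd hA (hl _ (List.mem_cons_self))

lemma nullSub_single {g' : ContextFreeGrammar T} {x : Symbol T g'.NT} {res}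
    (h : NullSub g' [x] res) : res = [x] ∨ res = [] := by
  cases h with
  | keep _ h' => rw [h'.nil_left]; exact Or.inl rfl
  | del _ h' => exact Or.inr h'.nil_left

lemma lcg_inl_not_nullable (A : g.NT) : ¬ Nullable (lcg g) (Sum.inl A) := by
  intro h
  obtain ⟨n, hn⟩ := derives_iff_derivesIn.mp h
  have hn' : DerivesIn (lcg g) [Symbol.nonterminal (Sum.inl A)]
      (List.map Symbol.terminal ([] : List T)) n := by simpa using hn
  obtain ⟨m, rfl⟩ := hn'.nt_ne_terminal
  obtain ⟨r', hr'mem, hin, hrest⟩ := hn'.head_rule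
  rcases (mem_lcg g).mp hr'mem with (⟨A', hA', a, ha, rfl⟩ | ⟨A', hA', r, hr, X, β, hout, rfl⟩) |
    ⟨A', hA', rfl⟩
  · have hrest' : DerivesIn (lcg g) ([Symbol.terminal a] ++
        [Symbol.nonterminal (Sum.inr (A', Symbol.terminal a))])
        (List.map Symbol.terminal ([] : List T)) m := by simpa using hrest
    obtain ⟨w₁, w₂, n₁, n₂, hw, hnn, h1, h2⟩ := hrest'.append_split_word
    obtain ⟨hw₁, -⟩ := h1.terminal_single
    rw [hw₁] at hw
    simp at hw
  · exact absurd hin (by simp)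
  · exact absurd hin (by simp)

lemma embS_not_nullable {β : List (Symbol T g.NT)} :
    ∀ A, Symbol.nonterminal A ∈ β.map (embS g) → ¬ Nullable (lcg g) A := by
  intro A hA
  simp only [List.mem_map] at hA
  obtain ⟨y, -, hy⟩ := hA
  cases y with
  | terminal a => exact absurd hy (by simp [embS])
  | nonterminal D =>
    have : A = Sum.inl D := by
      simp only [embS] at hy
      exact (Symbol.nonterminal.inj hy).symm
    rw [this]
    exact lcg_inl_not_nullable g D

/-- Decomposition of rules of `epsElim (lcg g)`. -/
lemma g4_decomp {r' : ContextFreeRule T (lcNT g)} (hr' : r' ∈ (epsElim (lcg g)).rules) :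
    ∃ r₀ ∈ (lcg g).rules, r'.input = r₀.input ∧ NullSub (lcg g) r₀.output r'.output ∧
      r'.output ≠ [] :=
  (mem_epsElim (lcg g)).mp hr'

lemma g4_inl_TI {r' : ContextFreeRule T (lcNT g)} (hr' : r' ∈ (epsElim (lcg g)).rules)
    (A : g.NT) (hin : r'.input = Sum.inl A) : TI r' := by
  obtain ⟨r₀, hr₀, hin', hsub, hne⟩ := g4_decomp g hr'
  obtain ⟨rin, rout⟩ := r'
  simp only at hin hin' hsub hne ⊢
  rcases (mem_lcg g).mp hr₀ with (⟨A', hA', a, ha, rfl⟩ | ⟨A', hA', r, hr, X, β, hout, rfl⟩) |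
    ⟨A', hA', rfl⟩
  · have hsub' : NullSub (lcg g)
        [Symbol.terminal a, Symbol.nonterminal (Sum.inr (A', Symbol.terminal a))] rout := hsub
    cases hsub' with
    | keep _ h' => exact ⟨a, _, rfl⟩
  · rw [hin'] at hin; exact absurd hin (by simp)
  · rw [hin'] at hin; exact absurd hin (by simp)

lemma g4_head_cases {r' : ContextFreeRule T (lcNT g)} (hr' : r' ∈ (epsElim (lcg g)).rules) :
    TI r' ∨ (∃ D δ', r'.output = Symbol.nonterminal (Sum.inl D) :: δ') ∨
    (∃ E B δ', r'.output = Symbol.nonterminal (Sum.inr (E, Symbol.nonterminal B)) :: δ') := by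
  obtain ⟨r₀, hr₀, hin', hsub, hne⟩ := g4_decomp g hr'
  obtain ⟨rin, rout⟩ := r'
  simp only at hin' hsub hne ⊢
  rcases (mem_lcg g).mp hr₀ with (⟨A', hA', a, ha, rfl⟩ | ⟨A', hA', r, hr, X, β, hout, rfl⟩) |
    ⟨A', hA', rfl⟩
  · have hsub' : NullSub (lcg g)
        [Symbol.terminal a, Symbol.nonterminal (Sum.inr (A', Symbol.terminal a))] rout := hsub
    cases hsub' with
    | keep _ h' => exact Or.inl ⟨a, _, rfl⟩
  · have hsub' : NullSub (lcg g) (β.map (embS g) ++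
        [Symbol.nonterminal (Sum.inr (A', Symbol.nonterminal r.input))]) rout := hsub
    obtain ⟨res₂, hres, hns⟩ := nullSub_append_invariant hsub' (embS_not_nullable g)
    rcases β with _ | ⟨y, β'⟩
    · simp only [List.map_nil, List.nil_append] at hres
      rcases nullSub_single hns with h1 | h1
      · rw [hres, h1]
        exact Or.inr (Or.inr ⟨A', r.input, [], rfl⟩)
      · rw [hres, h1] at hne; simp at hne
    · cases y with
      | terminal b => exact Or.inl ⟨b, _, by rw [hres]; rfl⟩
      | nonterminal D => exact Or.inr (Or.inl ⟨D, _, by rw [hres]; rfl⟩)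
  · have hsub' : NullSub (lcg g) [] rout := hsub
    rw [hsub'.nil_left] at hne; simp at hne

lemma g4_pair_nt {r' : ContextFreeRule T (lcNT g)}
    (hgu : ∀ r ∈ g.rules, ¬ IsUnit g r.output)
    (hr' : r' ∈ (epsElim (lcg g)).rules)
    (E : g.NT) (B : g.NT) (hin : r'.input = Sum.inr (E, Symbol.nonterminal B)) :
    TI r' ∨ ∃ D δ', r'.output = Symbol.nonterminal (Sum.inl D) :: δ' := by
  obtain ⟨r₀, hr₀, hin', hsub, hne⟩ := g4_decomp g hr'
  obtain ⟨rin, rout⟩ := r'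
  simp only at hin hin' hsub hne ⊢
  rcases (mem_lcg g).mp hr₀ with (⟨A', hA', a, ha, rfl⟩ | ⟨A', hA', r, hr, X, β, hout, rfl⟩) |
    ⟨A', hA', rfl⟩
  · rw [hin'] at hin; exact absurd hin (by simp)
  · -- X = nonterminal B
    have hX : X = Symbol.nonterminal B := by
      rw [hin'] at hin
      have := Prod.ext_iff.mp (Sum.inr.inj (show Sum.inr (A', X) = _ from hin))
      exact this.2
    have hsub' : NullSub (lcg g) (β.map (embS g) ++
        [Symbol.nonterminal (Sum.inr (A', Symbol.nonterminal r.input))]) rout := hsub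
    obtain ⟨res₂, hres, hns⟩ := nullSub_append_invariant hsub' (embS_not_nullable g)
    rcases β with _ | ⟨y, β'⟩
    · exfalso
      rw [hX] at hout
      exact hgu r hr ⟨B, hout⟩
    · cases y with
      | terminal b => exact Or.inl ⟨b, _, by rw [hres]; rfl⟩
      | nonterminal D => exact Or.inr ⟨D, _, by rw [hres]; rfl⟩
  · have hsub' : NullSub (lcg g) [] rout := hsub
    rw [hsub'.nil_left] at hne; simp at hne

lemma step1_shape (hgu : ∀ r ∈ g.rules, ¬ IsUnit g r.output) :
    ∀ r' ∈ (stepG (epsElim (lcg g))).rules,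
      (TI r' ∨ ∃ D δ', r'.output = Symbol.nonterminal (Sum.inl D) :: δ') ∧
      (∀ A, r'.input = Sum.inl A → TI r') := by
  intro r' hr'
  rcases (mem_stepG _).mp hr' with ⟨hmem, hti⟩ | ⟨r, hrmem, B, δ, hout, r₂, hr₂mem, hr₂in, rfl⟩
  · exact ⟨Or.inl hti, fun _ _ => hti⟩
  · constructor
    · -- classify B using g4_head_cases on r
      rcases g4_head_cases g hrmem with ⟨a, δ', hout'⟩ | ⟨D, δ', hout'⟩ | ⟨E, B', δ', hout'⟩
      · rw [hout] at hout'; simp at hout'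
      · -- B = inl D
        rw [hout] at hout'
        injection hout' with hB hδ
        subst hδ
        have hB' : B = Sum.inl D := Symbol.nonterminal.inj hB
        obtain ⟨a, δ₂, h₂⟩ := g4_inl_TI g hr₂mem D (by rw [hr₂in, hB'])
        exact Or.inl ⟨a, _, by rw [h₂]; rfl⟩
      · -- B = inr (E, nt B')
        rw [hout] at hout'
        injection hout' with hB hδ
        subst hδ
        have hB2 : B = Sum.inr (E, Symbol.nonterminal B') := Symbol.nonterminal.inj hB
        rcases g4_pair_nt g hgu hr₂mem E B' (by rw [hr₂in, hB2]) with ⟨a, δ₂, h₂⟩ | ⟨D, δ₂, h₂⟩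
        · exact Or.inl ⟨a, _, by rw [h₂]; rfl⟩
        · exact Or.inr ⟨D, _, by rw [h₂]; rfl⟩
    · -- inl inputs are TI in g₄, so such compositions are impossible
      intro A hin
      obtain ⟨a, δ', hout'⟩ := g4_inl_TI g hrmem A hin
      rw [hout] at hout'
      simp at hout'

lemma step2_TI (hgu : ∀ r ∈ g.rules, ¬ IsUnit g r.output) :
    ∀ r' ∈ (stepG (stepG (epsElim (lcg g)))).rules, TI r' := by
  intro r' hr'
  rcases (mem_stepG _).mp hr' with ⟨hmem, hti⟩ | ⟨r, hrmem, B, δ, hout, r₂, hr₂mem, hr₂in, rfl⟩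
  · exact hti
  · rcases (step1_shape g hgu r hrmem).1 with ⟨a, δ', hout'⟩ | ⟨D, δ', hout'⟩
    · rw [hout] at hout'; simp at hout'
    · rw [hout] at hout'
      injection hout' with hB hδ
      subst hδ
      have hB' : B = Sum.inl D := Symbol.nonterminal.inj hB
      obtain ⟨a, δ₂, h₂⟩ := (step1_shape g hgu r₂ hr₂mem).2 D (by rw [hr₂in, hB'])
      exact ⟨a, _, by rw [h₂]; rfl⟩

end Shapes

end GNF

/-- Every context-free language not containing the empty string is generated by a
context-free grammar in Greibach Normal Form. -/
theorem exists_gnf_grammar {T : Type} (L : Language T)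
    (hL : L.IsContextFree) (hε : [] ∉ L) :
    ∃ g : ContextFreeGrammar T, InGNF g ∧ g.language = L := by
  classical
  obtain ⟨g₀, hg₀⟩ := hL
  have hε₀ : [] ∉ g₀.language := by rw [hg₀]; exact hε
  -- pipeline
  set g₁ := GNF.epsElim g₀ with hg₁def
  have hL₁ : g₁.language = L := by rw [GNF.epsElim_language g₀ hε₀, hg₀]
  have hF₁ : ∀ r ∈ g₁.rules, r.output ≠ [] := GNF.epsElim_epsFree g₀
  set g₂ := GNF.unitElim g₁ with hg₂def
  have hL₂ : g₂.language = L := by rw [GNF.unitElim_language g₁, hL₁]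
  have hF₂ : ∀ r ∈ g₂.rules, r.output ≠ [] := GNF.unitElim_epsFree g₁ hF₁
  have hU₂ : ∀ r ∈ g₂.rules, ¬ GNF.IsUnit g₂ r.output := GNF.unitElim_unitFree g₁
  set g₃ := GNF.lcg g₂ with hg₃def
  have hL₃ : g₃.language = L := by rw [GNF.lcg_language g₂ hF₂, hL₂]
  have hε₃ : [] ∉ g₃.language := by rw [hL₃]; exact hε
  set g₄ := GNF.epsElim g₃ with hg₄def
  have hL₄ : g₄.language = L := by rw [GNF.epsElim_language g₃ hε₃, hL₃]
  have hF₄ : ∀ r ∈ g₄.rules, r.output ≠ [] := GNF.epsElim_epsFree g₃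
  set g₅ := GNF.stepG g₄ with hg₅def
  have hL₅ : g₅.language = L := by rw [GNF.stepG_language g₄ hF₄, hL₄]
  have hF₅ : ∀ r ∈ g₅.rules, r.output ≠ [] := GNF.stepG_epsFree g₄ hF₄
  set g₆ := GNF.stepG g₅ with hg₆def
  have hL₆ : g₆.language = L := by rw [GNF.stepG_language g₅ hF₅, hL₅]
  have hTI : ∀ r ∈ g₆.rules, GNF.TI r := GNF.step2_TI g₂ hU₂
  set g₇ := GNF.liftG g₆ with hg₇def
  have hL₇ : g₇.language = L := by rw [GNF.liftG_language g₆ hTI, hL₆]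
  refine ⟨GNF.relabelG g₇, GNF.relabelG_gnf g₇ (GNF.liftG_gnf g₆), ?_⟩
  rw [GNF.relabelG_language g₇, hL₇]
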